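/- Let G be a connected unweighted simple graph and let e = (u,v) be an edge of G. Then for every pair of vertices x, y of G, dist_{G∖e}(x,y) · dist_G(u,v) ≤ dist_{G∖e}(u,v) · dist_G(x,y) (with distances in ℕ∞, where a missing path gives distance ∞). Consequently the fragility of e, defined as max over vertex pairs x,y of dist_{G∖e}(x,y)/dist_G(x,y), is attained at the pair {u,v}, i.e. frag_G(e) = dist_{G∖e}(u,v)/dist_G(u,v). -/

import Mathlib

open SimpleGraph ENNReal

private lemma walk_bound {V : Type*} (G : SimpleGraph V) (u v : V) (huv : G.Adj u v)
    {x y : V} (p : G.Walk x y) :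
    (G.deleteEdges {s(u,v)}).edist x y ≤
      (G.deleteEdges {s(u,v)}).edist u v * p.length := by
  set G' := G.deleteEdges {s(u,v)} with hG'
  set D := G'.edist u v with hD
  have hD1 : (1 : ℕ∞) ≤ D := ENat.one_le_iff_ne_zero.mpr
    (by simpa [hD] using (edist_eq_zero_iff (G := G')).ne.mpr huv.ne)
  induction p with
  | nil => simp
  | cons h q ih =>
    rename_i a b c
    have hstep : G'.edist a b ≤ D := by
      by_cases he : s(a, b) = s(u, v)
      · rw [Sym2.eq_iff] at he
        rcases he with ⟨rfl, rfl⟩ | ⟨rfl, rfl⟩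
        · exact le_rfl
        · rw [edist_comm]
      · have hadj : G'.Adj a b := by
          rw [hG', SimpleGraph.deleteEdges_adj]
          exact ⟨h, by simpa using he⟩
        exact (edist_eq_one_iff_adj.mpr hadj).le.trans hD1
    calc G'.edist a c ≤ G'.edist a b + G'.edist b c := SimpleGraph.edist_triangle
      _ ≤ D + D * q.length := add_le_add hstep ih
      _ = D * ((q.cons h).length : ℕ∞) := by
          rw [SimpleGraph.Walk.length_cons]
          push_cast
          ring

/-- In a connected unweighted simple graph `G` with edge `e = (u,v)`,
for all vertices `x, y` we have
`dist_{G∖e}(x,y) · dist_G(u,v) ≤ dist_{G∖e}(u,v) · dist_G(x,y)` (distances in `ℕ∞`),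
and consequently the fragility `frag_G(e) = sup_{x,y} dist_{G∖e}(x,y) / dist_G(x,y)`
is attained at the pair `{u,v}`. -/
theorem stmt_0 {V : Type*} (G : SimpleGraph V) (hG : G.Connected)
    (u v : V) (huv : G.Adj u v) :
    (∀ x y : V,
      (G.deleteEdges {s(u,v)}).edist x y * G.edist u v ≤
        (G.deleteEdges {s(u,v)}).edist u v * G.edist x y) ∧
    (⨆ x : V, ⨆ y : V,
        ((G.deleteEdges {s(u,v)}).edist x y : ℝ≥0∞) / (G.edist x y : ℝ≥0∞)) =
      ((G.deleteEdges {s(u,v)}).edist u v : ℝ≥0∞) / (G.edist u v : ℝ≥0∞) := by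
  set G' := G.deleteEdges {s(u,v)} with hG'
  have huv1 : G.edist u v = 1 := edist_eq_one_iff_adj.mpr huv
  have key : ∀ x y : V, G'.edist x y ≤ G'.edist u v * G.edist x y := by
    intro x y
    have hne : G.edist x y ≠ ⊤ := edist_ne_top_iff_reachable.mpr (hG x y)
    obtain ⟨p, hp⟩ := exists_walk_of_edist_ne_top hne
    rw [← hp]
    exact walk_bound G u v huv p
  constructor
  · intro x y
    rw [huv1, mul_one]
    exact key x y
  · apply le_antisymm
    · refine iSup_le fun x => iSup_le fun y => ?_
      rw [huv1]
      simp only [ENat.toENNReal_one, div_one]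
      by_cases hxy : x = y
      · subst hxy
        simp [SimpleGraph.edist_self]
      · have hne : G.edist x y ≠ ⊤ := edist_ne_top_iff_reachable.mpr (hG x y)
        have h0 : (G.edist x y : ℝ≥0∞) ≠ 0 := by
          rw [← ENat.toENNReal_zero, ne_eq, ENat.toENNReal_inj]
          exact (edist_eq_zero_iff (G := G)).ne.mpr hxy
        have htop : (G.edist x y : ℝ≥0∞) ≠ ⊤ := by
          rw [← ENat.toENNReal_top, ne_eq, ENat.toENNReal_inj]
          exact hne
        rw [ENNReal.div_le_iff h0 htop]
        calc ((G'.edist x y : ℕ∞) : ℝ≥0∞) ≤ ((G'.edist u v * G.edist x y : ℕ∞) : ℝ≥0∞) :=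
              ENat.toENNReal_le.mpr (key x y)
          _ = (G'.edist u v : ℝ≥0∞) * (G.edist x y : ℝ≥0∞) := by
              rw [ENat.toENNReal_mul]
    · exact le_iSup_of_le u (le_iSup_of_le v le_rfl)
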